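/- In a modular operad, the composition operations ∘_f along a bijection f : U → V of d-element subsets can be recovered from single compositions and contractions: choosing any u ∈ U, the map ∘_f equals the composite of ∘_{u, f(u)} followed by the contractions c_{v, f(v)} for all v ∈ U \ {u}, and this is independent of the choice of u and of the order of the contractions. -/

import Mathlib

/-- A (graded) modular operad, modelled on finite subsets of `ℕ`: a collection
of spaces `M n X` (`n` the genus-like grading, `X` the labelling set), with
cyclic-operad compositions `∘_{x,y}`, a unit, and contraction operations
`c_{x,y}` raising the grading, satisfying the axioms of
Getzler–Kapranov/Hinich–Vaintrob (symmetry of contractions, commutation of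
independent contractions, compatibility of contractions with composition).
Operations are given totally; the axioms carry the relevant side conditions. -/
structure GradedModular where
  M : ℕ → Finset ℕ → Type
  unitEl : ∀ p q : ℕ, M 0 {p, q}
  comp : ∀ {m n : ℕ} {X Y : Finset ℕ} (x y : ℕ), M m X → M n Y →
    M (m + n) (((X ∪ Y).erase x).erase y)
  contr : ∀ {n : ℕ} {X : Finset ℕ} (x y : ℕ), M n X →
    M (n + 1) ((X.erase x).erase y)
  comp_comm : ∀ {m n : ℕ} {X Y : Finset ℕ} (x y : ℕ) (a : M m X) (b : M n Y),
    Disjoint X Y → x ∈ X → y ∈ Y → HEq (comp x y a b) (comp y x b a)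
  comp_assoc : ∀ {m n p : ℕ} {X Y Z : Finset ℕ} (x y y' z : ℕ)
    (a : M m X) (b : M n Y) (c : M p Z),
    Disjoint X Y → Disjoint X Z → Disjoint Y Z →
    x ∈ X → y ∈ Y → y' ∈ Y → z ∈ Z → y ≠ y' →
    HEq (comp y' z (comp x y a b) c) (comp x y a (comp y' z b c))
  comp_unit : ∀ {m : ℕ} {X : Finset ℕ} (x y : ℕ) (a : M m X),
    x ∈ X → y ∉ X → HEq (comp x y a (unitEl y x)) a
  contr_symm : ∀ {n : ℕ} {X : Finset ℕ} (x y : ℕ) (a : M n X),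
    HEq (contr x y a) (contr y x a)
  contr_contr : ∀ {n : ℕ} {X : Finset ℕ} (x y z t : ℕ) (a : M n X),
    x ∈ X → y ∈ X → z ∈ X → t ∈ X →
    x ≠ y → z ≠ t → x ≠ z → x ≠ t → y ≠ z → y ≠ t →
    HEq (contr x y (contr z t a)) (contr z t (contr x y a))
  contr_comp : ∀ {m n : ℕ} {X Y : Finset ℕ} (x₁ x₂ y₁ y₂ : ℕ)
    (a : M m X) (b : M n Y),
    Disjoint X Y → x₁ ∈ X → x₂ ∈ X → y₁ ∈ Y → y₂ ∈ Y → x₁ ≠ x₂ → y₁ ≠ y₂ →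
    ((X ∪ Y) \ {x₁, x₂, y₁, y₂}).Nonempty →
    HEq (contr x₁ y₁ (comp x₂ y₂ a b)) (contr x₂ y₂ (comp x₁ y₁ a b))

/-- The label set remaining after contracting the pairs `(v, f v)`, `v ∈ L`. -/
def eraseList (f : ℕ → ℕ) (L : List ℕ) (S : Finset ℕ) : Finset ℕ :=
  L.foldr (fun v T => (T.erase v).erase (f v)) S

/-- Iterated contraction of the pairs `(v, f v)` for `v` running through the
list `L`. -/
def iterContr (D : GradedModular) (f : ℕ → ℕ) :
    (L : List ℕ) → {n : ℕ} → {S : Finset ℕ} → D.M n S →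
      D.M (n + L.length) (eraseList f L S)
  | [], _, _, a => a
  | v :: L, _, _, a => D.contr v (f v) (iterContr D f L a)

section Aux

variable (D : GradedModular) (f : ℕ → ℕ)

lemma contr_congr (x y : ℕ) {n₁ n₂ : ℕ} {S₁ S₂ : Finset ℕ}
    (hn : n₁ = n₂) (hS : S₁ = S₂) {a₁ : D.M n₁ S₁} {a₂ : D.M n₂ S₂}
    (ha : HEq a₁ a₂) : HEq (D.contr x y a₁) (D.contr x y a₂) := by
  subst hn; subst hS; cases ha; rfl

lemma iterContr_congr (L : List ℕ) {n₁ n₂ : ℕ} {S₁ S₂ : Finset ℕ}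
    (hn : n₁ = n₂) (hS : S₁ = S₂) {a₁ : D.M n₁ S₁} {a₂ : D.M n₂ S₂}
    (ha : HEq a₁ a₂) : HEq (iterContr D f L a₁) (iterContr D f L a₂) := by
  subst hn; subst hS; cases ha; rfl

lemma eraseList_cons (v : ℕ) (L : List ℕ) (S : Finset ℕ) :
    eraseList f (v :: L) S = ((eraseList f L S).erase v).erase (f v) := rfl

lemma mem_eraseList {L : List ℕ} {S : Finset ℕ} {x : ℕ} :
    x ∈ eraseList f L S ↔ x ∈ S ∧ ∀ v ∈ L, x ≠ v ∧ x ≠ f v := by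
  induction L with
  | nil => simp [eraseList]
  | cons v L ih =>
      simp only [eraseList_cons, Finset.mem_erase, ih, List.mem_cons]
      constructor
      · rintro ⟨h1, h2, h3, h4⟩
        exact ⟨h3, fun w hw => hw.elim (fun e => e ▸ ⟨h2, h1⟩) (fun hw => h4 w hw)⟩
      · rintro ⟨h1, h2⟩
        exact ⟨(h2 v (Or.inl rfl)).2, (h2 v (Or.inl rfl)).1, h1,
          fun w hw => h2 w (Or.inr hw)⟩

lemma eraseList_perm {L₁ L₂ : List ℕ} (h : L₁.Perm L₂) (S : Finset ℕ) :
    eraseList f L₁ S = eraseList f L₂ S := by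
  ext x
  simp only [mem_eraseList, h.mem_iff]


lemma eraseList_append (L : List ℕ) (v : ℕ) (S : Finset ℕ) :
    eraseList f (L ++ [v]) S = eraseList f L ((S.erase v).erase (f v)) := by
  simp [eraseList, List.foldr_append]

lemma iterContr_append (v : ℕ) :
    ∀ (L : List ℕ) {n : ℕ} {S : Finset ℕ} (a : D.M n S),
      HEq (iterContr D f (L ++ [v]) a) (iterContr D f L (D.contr v (f v) a))
  | [], n, S, a => HEq.rfl
  | w :: L, n, S, a => by
      show HEq (D.contr w (f w) (iterContr D f (L ++ [v]) a))
        (D.contr w (f w) (iterContr D f L (D.contr v (f v) a)))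
      exact contr_congr D w (f w) (by simp; omega) (eraseList_append f L v S)
        (iterContr_append v L a)

lemma iterContr_perm :
    ∀ {L₁ L₂ : List ℕ}, L₁.Perm L₂ →
    ∀ {n : ℕ} {S : Finset ℕ} (a : D.M n S),
      (∀ v ∈ L₁, v ∈ S) → (∀ v ∈ L₁, f v ∈ S) → L₁.Nodup →
      (∀ v ∈ L₁, ∀ w ∈ L₁, v ≠ f w) →
      (∀ v ∈ L₁, ∀ w ∈ L₁, v ≠ w → f v ≠ f w) →
      HEq (iterContr D f L₁ a) (iterContr D f L₂ a) := by
  intro L₁ L₂ h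
  induction h with
  | nil => intro n S a _ _ _ _ _; rfl
  | cons x h ih =>
      intro n S a h1 h2 hnd h3 h4
      show HEq (D.contr x (f x) _) (D.contr x (f x) _)
      refine contr_congr D _ _ (by rw [h.length_eq]) (eraseList_perm f h S)
        (ih a (fun v hv => h1 v (List.mem_cons_of_mem _ hv))
          (fun v hv => h2 v (List.mem_cons_of_mem _ hv))
          (List.nodup_cons.mp hnd).2
          (fun v hv w hw => h3 v (List.mem_cons_of_mem _ hv) w (List.mem_cons_of_mem _ hw))
          (fun v hv w hw => h4 v (List.mem_cons_of_mem _ hv) w (List.mem_cons_of_mem _ hw)))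
  | swap x y l =>
      intro n S a h1 h2 hnd h3 h4
      have hxm : x ∈ (y :: x :: l) := List.mem_cons_of_mem _ (List.mem_cons_self)
      have hym : y ∈ (y :: x :: l) := List.mem_cons_self
      have hyx : y ≠ x := by
        intro e; exact (List.nodup_cons.mp hnd).1 (e ▸ List.mem_cons_self)
      have hlnd : l.Nodup := (List.nodup_cons.mp (List.nodup_cons.mp hnd).2).2
      have hxl : x ∉ l := (List.nodup_cons.mp (List.nodup_cons.mp hnd).2).1
      have hyl : y ∉ l := fun hy => (List.nodup_cons.mp hnd).1 (List.mem_cons_of_mem _ hy)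
      have memT : ∀ z, z ∈ (y :: x :: l) → z ∉ l → z ∈ eraseList f l S := by
        intro z hz hzl
        rw [mem_eraseList]
        refine ⟨h1 z hz, fun v hv => ⟨?_, ?_⟩⟩
        · intro e; exact hzl (e ▸ hv)
        · exact h3 z hz v (List.mem_cons_of_mem _ (List.mem_cons_of_mem _ hv))
      have memTf : ∀ z, z ∈ (y :: x :: l) → z ∉ l → f z ∈ eraseList f l S := by
        intro z hz hzl
        rw [mem_eraseList]
        refine ⟨h2 z hz, fun v hv => ⟨?_, ?_⟩⟩
        · exact (h3 v (List.mem_cons_of_mem _ (List.mem_cons_of_mem _ hv)) z hz).symm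
        · exact h4 z hz v (List.mem_cons_of_mem _ (List.mem_cons_of_mem _ hv))
            (fun e => hzl (e ▸ hv))
      show HEq (D.contr y (f y) (D.contr x (f x) (iterContr D f l a)))
        (D.contr x (f x) (D.contr y (f y) (iterContr D f l a)))
      exact D.contr_contr y (f y) x (f x) (iterContr D f l a)
        (memT y hym hyl) (memTf y hym hyl) (memT x hxm hxl) (memTf x hxm hxl)
        (h3 y hym y hym) (h3 x hxm x hxm) hyx
        (h3 y hym x hxm) ((h3 x hxm y hym).symm)
        (h4 y hym x hxm hyx)
  | trans hp hq ih₁ ih₂ =>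
      intro n S a h1 h2 hnd h3 h4
      refine (ih₁ a h1 h2 hnd h3 h4).trans (ih₂ a ?_ ?_ ?_ ?_ ?_)
      · exact fun v hv => h1 v (hp.mem_iff.mpr hv)
      · exact fun v hv => h2 v (hp.mem_iff.mpr hv)
      · exact hp.nodup hnd
      · exact fun v hv w hw => h3 v (hp.mem_iff.mpr hv) w (hp.mem_iff.mpr hw)
      · exact fun v hv w hw => h4 v (hp.mem_iff.mpr hv) w (hp.mem_iff.mpr hw)

end Aux


/-- In a modular operad, the composition `∘_f` along a bijection
`f : U → V` (`U ⊆ X`, `V ⊆ Y` non-empty) can be defined, for any choice of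
`u ∈ U`, as the single composition `∘_{u, f u}` followed by the contractions
`c_{v, f v}` for `v ∈ U \ {u}` (in any order); the result is independent of
the choice of `u` and of the order of the contractions. -/
theorem modular_comp_along_bijection_well_defined
    (D : GradedModular) {m n : ℕ} {X Y : Finset ℕ} (hXY : Disjoint X Y)
    (U V : Finset ℕ) (hUX : U ⊆ X) (hVY : V ⊆ Y) (hUne : U.Nonempty)
    (f : ℕ → ℕ) (hinj : Set.InjOn f U) (him : U.image f = V)
    (hrem : ((X \ U) ∪ (Y \ V)).Nonempty)
    (a : D.M m X) (b : D.M n Y)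
    (u₁ u₂ : ℕ) (hu₁ : u₁ ∈ U) (hu₂ : u₂ ∈ U)
    (L₁ L₂ : List ℕ) (h₁ : L₁.Nodup) (h₂ : L₂.Nodup)
    (hL₁ : L₁.toFinset = U.erase u₁) (hL₂ : L₂.toFinset = U.erase u₂) :
    HEq (iterContr D f L₁ (D.comp u₁ (f u₁) a b))
        (iterContr D f L₂ (D.comp u₂ (f u₂) a b)) := by
  classical
  have hfU : ∀ v ∈ U, f v ∈ V := fun v hv => him ▸ Finset.mem_image_of_mem f hv
  have hfY : ∀ v ∈ U, f v ∈ Y := fun v hv => hVY (hfU v hv)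
  have hXYne : ∀ p ∈ X, ∀ q ∈ Y, p ≠ q := fun p hp q hq e =>
    Finset.disjoint_left.mp hXY hp (e ▸ hq)
  have key : ∀ u ∈ U, ∀ (L L' : List ℕ), L.Perm L' → L.Nodup →
      (∀ v ∈ L, v ∈ U.erase u) →
      HEq (iterContr D f L (D.comp u (f u) a b))
          (iterContr D f L' (D.comp u (f u) a b)) := by
    intro u hu L L' hperm hnd hmem
    refine iterContr_perm D f hperm _ ?_ ?_ hnd ?_ ?_
    · intro v hv
      obtain ⟨hvu, hvU⟩ := Finset.mem_erase.mp (hmem v hv)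
      exact Finset.mem_erase.mpr ⟨hXYne v (hUX hvU) (f u) (hfY u hu),
        Finset.mem_erase.mpr ⟨hvu, Finset.mem_union_left _ (hUX hvU)⟩⟩
    · intro v hv
      obtain ⟨hvu, hvU⟩ := Finset.mem_erase.mp (hmem v hv)
      refine Finset.mem_erase.mpr ⟨?_, Finset.mem_erase.mpr ⟨?_,
        Finset.mem_union_right _ (hfY v hvU)⟩⟩
      · intro e
        exact hvu (hinj (Finset.mem_coe.mpr hvU) (Finset.mem_coe.mpr hu) e)
      · exact (hXYne u (hUX hu) (f v) (hfY v hvU)).symm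
    · intro v hv w hw
      exact hXYne v (hUX (Finset.mem_of_mem_erase (hmem v hv))) (f w)
        (hfY w (Finset.mem_of_mem_erase (hmem w hw)))
    · intro v hv w hw hvw e
      exact hvw (hinj (Finset.mem_coe.mpr (Finset.mem_of_mem_erase (hmem v hv)))
        (Finset.mem_coe.mpr (Finset.mem_of_mem_erase (hmem w hw))) e)
  by_cases huu : u₁ = u₂
  · subst huu
    exact key u₁ hu₁ L₁ L₂
      (List.perm_of_nodup_nodup_toFinset_eq h₁ h₂ (hL₁.trans hL₂.symm)) h₁
      (fun v hv => hL₁ ▸ List.mem_toFinset.mpr hv)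
  · set R : List ℕ := ((U.erase u₁).erase u₂).toList with hR
    have hRnd : R.Nodup := Finset.nodup_toList _
    have hRf : R.toFinset = (U.erase u₁).erase u₂ := Finset.toList_toFinset _
    have hRf' : R.toFinset = (U.erase u₂).erase u₁ := by
      rw [hRf]
      ext x
      simp only [Finset.mem_erase]
      tauto
    have hu₂R : u₂ ∉ R := fun h =>
      Finset.notMem_erase u₂ _ (hRf ▸ List.mem_toFinset.mpr h)
    have hu₁R : u₁ ∉ R := fun h =>
      Finset.notMem_erase u₁ _ (hRf' ▸ List.mem_toFinset.mpr h)
    have nd2 : (R ++ [u₂]).Nodup := by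
      simp [List.nodup_append, hRnd, hu₂R]
      exact fun a ha e => hu₂R (by rwa [e] at ha)
    have nd1 : (R ++ [u₁]).Nodup := by
      simp [List.nodup_append, hRnd, hu₁R]
      exact fun a ha e => hu₁R (by rwa [e] at ha)
    have hT2 : (R ++ [u₂]).toFinset = U.erase u₁ := by
      rw [List.toFinset_append, hRf]
      ext x
      simp only [Finset.mem_union, Finset.mem_erase, List.toFinset_cons, List.toFinset_nil,
        insert_empty_eq, Finset.mem_singleton]
      constructor
      · rintro (⟨hx2, hx1, hxU⟩ | rfl)
        · exact ⟨hx1, hxU⟩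
        · exact ⟨fun e => huu e.symm, hu₂⟩
      · rintro ⟨hx1, hxU⟩
        by_cases hx2 : x = u₂
        · exact Or.inr hx2
        · exact Or.inl ⟨hx2, hx1, hxU⟩
    have hT1 : (R ++ [u₁]).toFinset = U.erase u₂ := by
      rw [List.toFinset_append, hRf']
      ext x
      simp only [Finset.mem_union, Finset.mem_erase, List.toFinset_cons, List.toFinset_nil,
        insert_empty_eq, Finset.mem_singleton]
      constructor
      · rintro (⟨hx1, hx2, hxU⟩ | rfl)
        · exact ⟨hx2, hxU⟩
        · exact ⟨huu, hu₁⟩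
      · rintro ⟨hx2, hxU⟩
        by_cases hx1 : x = u₁
        · exact Or.inr hx1
        · exact Or.inl ⟨hx1, hx2, hxU⟩
    have hfne : f u₂ ≠ f u₁ := fun e =>
      huu ((hinj (Finset.mem_coe.mpr hu₂) (Finset.mem_coe.mpr hu₁) e).symm)
    have hne4 : ((X ∪ Y) \ {u₂, u₁, f u₂, f u₁}).Nonempty := by
      obtain ⟨w, hw⟩ := hrem
      rcases Finset.mem_union.mp hw with hw | hw
      · obtain ⟨hwX, hwU⟩ := Finset.mem_sdiff.mp hw
        refine ⟨w, Finset.mem_sdiff.mpr ⟨Finset.mem_union_left _ hwX, ?_⟩⟩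
        simp only [Finset.mem_insert, Finset.mem_singleton]
        push_neg
        exact ⟨fun e => hwU (e ▸ hu₂), fun e => hwU (e ▸ hu₁),
          hXYne w hwX (f u₂) (hfY u₂ hu₂), hXYne w hwX (f u₁) (hfY u₁ hu₁)⟩
      · obtain ⟨hwY, hwV⟩ := Finset.mem_sdiff.mp hw
        refine ⟨w, Finset.mem_sdiff.mpr ⟨Finset.mem_union_right _ hwY, ?_⟩⟩
        simp only [Finset.mem_insert, Finset.mem_singleton]
        push_neg
        exact ⟨fun e => hXYne u₂ (hUX hu₂) w hwY e.symm,
          fun e => hXYne u₁ (hUX hu₁) w hwY e.symm,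
          fun e => hwV (e ▸ hfU u₂ hu₂), fun e => hwV (e ▸ hfU u₁ hu₁)⟩
    have hcc : HEq (D.contr u₂ (f u₂) (D.comp u₁ (f u₁) a b))
        (D.contr u₁ (f u₁) (D.comp u₂ (f u₂) a b)) :=
      D.contr_comp u₂ u₁ (f u₂) (f u₁) a b hXY (hUX hu₂) (hUX hu₁)
        (hfY u₂ hu₂) (hfY u₁ hu₁) (fun e => huu e.symm) hfne hne4
    have hS : (((((X ∪ Y).erase u₁).erase (f u₁)).erase u₂).erase (f u₂)) =
        ((((X ∪ Y).erase u₂).erase (f u₂)).erase u₁).erase (f u₁) := by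
      ext x
      simp only [Finset.mem_erase]
      tauto
    have step1 := key u₁ hu₁ L₁ (R ++ [u₂])
      (List.perm_of_nodup_nodup_toFinset_eq h₁ nd2 (hL₁.trans hT2.symm)) h₁
      (fun v hv => hL₁ ▸ List.mem_toFinset.mpr hv)
    have step2 := iterContr_append D f u₂ R (D.comp u₁ (f u₁) a b)
    have step3 := iterContr_congr D f R rfl hS hcc
    have step4 := (iterContr_append D f u₁ R (D.comp u₂ (f u₂) a b)).symm
    have step5 := key u₂ hu₂ (R ++ [u₁]) L₂
      (List.perm_of_nodup_nodup_toFinset_eq nd1 h₂ (hT1.trans hL₂.symm)) nd1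
      (fun v hv => hT1 ▸ List.mem_toFinset.mpr hv)
    exact step1.trans (step2.trans (step3.trans (step4.trans step5)))
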